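/- Let (X,Y) have joint pmf P_{XY} on finite alphabets with full-support marginals, and let (X, Y, U_X, U_Y, Q) be finite-alphabet random variables with joint pmf of the form p(x,y) p(q) p(u_X | x, q) p(u_Y | y, q), where p(x,y) = P_{XY}(x,y). Suppose real numbers R_X, R_Y satisfy R_X ≥ I(X; U_X | U_Y, Q) and R_X + R_Y = I(X,Y; U_X, U_Y | Q). Then R_X + s*(Y;X) · R_Y ≥ I(X; U_X, U_Y | Q). -/

import Mathlib

open scoped BigOperators

noncomputable section

/-- A probability mass function on a finite type, as a real-valued function. -/
def IsPMF {α : Type*} [Fintype α] (p : α → ℝ) : Prop :=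
  (∀ a, 0 ≤ p a) ∧ ∑ a, p a = 1

/-- Kullback–Leibler divergence `D(q ‖ p)` between pmfs on a finite type. -/
def klDiv {α : Type*} [Fintype α] (q p : α → ℝ) : ℝ :=
  ∑ a, q a * Real.logb 2 (q a / p a)

variable {𝓧 𝓨 : Type*} [Fintype 𝓧] [Fintype 𝓨]

/-- x-marginal of a joint pmf. -/
def margX (P : 𝓧 → 𝓨 → ℝ) (x : 𝓧) : ℝ := ∑ y, P x y

/-- y-marginal of a joint pmf. -/
def margY (P : 𝓧 → 𝓨 → ℝ) (y : 𝓨) : ℝ := ∑ x, P x y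

/-- Output distribution of channel `P_{Y|X}` (from joint pmf `P`) driven by input `Q`. -/
def chanOut (P : 𝓧 → 𝓨 → ℝ) (Q : 𝓧 → ℝ) (y : 𝓨) : ℝ :=
  ∑ x, Q x * (P x y / margX P x)

/-- `s*(X;Y)`, for `(X,Y)` with joint pmf `P`. -/
def sStar (P : 𝓧 → 𝓨 → ℝ) : ℝ :=
  sSup { r : ℝ | ∃ Q : 𝓧 → ℝ, IsPMF Q ∧ Q ≠ margX P ∧
    r = klDiv (chanOut P Q) (margY P) / klDiv Q (margX P) }

/-- Mutual information `I(X;Y)` of a joint pmf. -/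
def mutualInfo (P : 𝓧 → 𝓨 → ℝ) : ℝ :=
  ∑ x, ∑ y, P x y * Real.logb 2 (P x y / (margX P x * margY P y))

/-- swapped joint pmf, for `s*(Y;X)` etc. -/
def swap (P : 𝓧 → 𝓨 → ℝ) : 𝓨 → 𝓧 → ℝ := fun y x => P x y

/-- n-fold memoryless extension of a joint source. -/
def iid (P : 𝓧 → 𝓨 → ℝ) (n : ℕ) : (Fin n → 𝓧) → (Fin n → 𝓨) → ℝ :=
  fun xs ys => ∏ i, P (xs i) (ys i)


/-- Conditional mutual information `I(A;B|C)` computed from a joint pmf on `A × B × C`. -/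
def condMI {A B C : Type*} [Fintype A] [Fintype B] [Fintype C]
    (p : A → B → C → ℝ) : ℝ :=
  ∑ a, ∑ b, ∑ c, p a b c *
    Real.logb 2 (p a b c * (∑ a', ∑ b', p a' b' c) /
      ((∑ b', p a b' c) * (∑ a', p a' b c)))

variable {𝓤x 𝓤y 𝓠 : Type*} [Fintype 𝓤x] [Fintype 𝓤y] [Fintype 𝓠]

/-- Joint pmf of `(X,Y,U_X,U_Y,Q)` of the Berger–Tung form
`p(x,y) p(q) p(u_X|x,q) p(u_Y|y,q)`. -/
def btJoint (P : 𝓧 → 𝓨 → ℝ) (pq : 𝓠 → ℝ)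
    (wx : 𝓧 → 𝓠 → 𝓤x → ℝ) (wy : 𝓨 → 𝓠 → 𝓤y → ℝ) :
    𝓧 → 𝓨 → 𝓤x → 𝓤y → 𝓠 → ℝ :=
  fun x y ux uy q => P x y * pq q * wx x q ux * wy y q uy

/-- Basic pointwise Gibbs-type bound. -/
lemma sub_le_mul_log (a b : ℝ) (ha : 0 ≤ a) (hb : 0 ≤ b) (h : 0 < a → 0 < b) :
    a - b ≤ a * Real.log (a / b) := by
  rcases ha.eq_or_lt with h0 | hpos
  · simp [← h0]; linarith
  · have hbpos := h hpos
    have h1 : Real.log (b / a) ≤ b / a - 1 :=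
      Real.log_le_sub_one_of_pos (div_pos hbpos hpos)
    have h2 : Real.log (a / b) = - Real.log (b / a) := by
      rw [Real.log_div (ne_of_gt hpos) (ne_of_gt hbpos),
          Real.log_div (ne_of_gt hbpos) (ne_of_gt hpos)]; ring
    have h3 : 1 - b / a ≤ Real.log (a / b) := by rw [h2]; linarith
    have := mul_le_mul_of_nonneg_left h3 (le_of_lt hpos)
    calc a - b = a * (1 - b / a) := by field_simp
    _ ≤ a * Real.log (a / b) := this

/-- Log-sum inequality. -/
lemma log_sum_ineq {ι : Type*} [Fintype ι] (a b : ι → ℝ)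
    (ha : ∀ i, 0 ≤ a i) (hb : ∀ i, 0 ≤ b i) (h : ∀ i, 0 < a i → 0 < b i) :
    (∑ i, a i) * Real.log ((∑ i, a i) / (∑ i, b i)) ≤
      ∑ i, a i * Real.log (a i / b i) := by
  set A := ∑ i, a i with hA
  set B := ∑ i, b i with hB
  rcases eq_or_lt_of_le (Finset.sum_nonneg (fun i _ => ha i) : (0:ℝ) ≤ A) with h0 | hApos
  · have hz : ∀ i ∈ Finset.univ, a i = 0 :=
      (Finset.sum_eq_zero_iff_of_nonneg (fun i _ => ha i)).mp h0.symm
    rw [show A = (0:ℝ) from hA.trans h0.symm, zero_mul]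
    refine le_of_eq (Finset.sum_eq_zero ?_).symm
    intro i _; rw [hz i (Finset.mem_univ i)]; ring
  · have hBpos : 0 < B := by
      obtain ⟨i0, hi0⟩ : ∃ i, 0 < a i := by
        by_contra hc; push_neg at hc
        have : A ≤ 0 := Finset.sum_nonpos (fun i _ => hc i)
        linarith
      exact Finset.sum_pos' (fun j _ => hb j) ⟨i0, Finset.mem_univ i0, h i0 hi0⟩
    have key : ∀ i, a i * Real.log (A / B) + (a i - b i * (A / B)) ≤ a i * Real.log (a i / b i) := by
      intro i
      rcases (ha i).eq_or_lt with h0i | hposi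
      · have : (0:ℝ) ≤ b i * (A / B) := mul_nonneg (hb i) (div_nonneg hApos.le hBpos.le)
        simp [← h0i]; linarith
      · have hbi := h i hposi
        have hb' : 0 < b i * (A / B) := mul_pos hbi (div_pos hApos hBpos)
        have h1 := sub_le_mul_log (a i) (b i * (A / B)) hposi.le hb'.le (fun _ => hb')
        have h2 : Real.log (a i / (b i * (A / B))) = Real.log (a i / b i) - Real.log (A / B) := by
          rw [Real.log_div (ne_of_gt hposi) (ne_of_gt hb'),
              Real.log_mul (ne_of_gt hbi) (ne_of_gt (div_pos hApos hBpos)),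
              Real.log_div (ne_of_gt hposi) (ne_of_gt hbi)]
          ring
        rw [h2] at h1
        nlinarith [h1]
    calc A * Real.log (A / B) = ∑ i, (a i * Real.log (A / B) + (a i - b i * (A / B))) := by
          rw [Finset.sum_add_distrib, Finset.sum_sub_distrib, ← Finset.sum_mul, ← Finset.sum_mul]
          field_simp
          rw [← hA, ← hB]; ring
    _ ≤ ∑ i, a i * Real.log (a i / b i) := Finset.sum_le_sum (fun i _ => key i)

lemma klDiv_eq_log {α : Type*} [Fintype α] (q p : α → ℝ) :
    klDiv q p = (∑ a, q a * Real.log (q a / p a)) / Real.log 2 := by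
  simp only [klDiv, Real.logb, Finset.sum_div, mul_div_assoc]

lemma klDiv_nonneg' {α : Type*} [Fintype α] (q p : α → ℝ)
    (hq : ∀ a, 0 ≤ q a) (hp : ∀ a, 0 ≤ p a) (h : ∀ a, 0 < q a → 0 < p a)
    (hs : ∑ a, p a ≤ ∑ a, q a) : 0 ≤ klDiv q p := by
  rw [klDiv_eq_log]
  apply div_nonneg _ (Real.log_nonneg one_le_two)
  calc (0:ℝ) ≤ ∑ a, (q a - p a) := by rw [Finset.sum_sub_distrib]; linarith
  _ ≤ ∑ a, q a * Real.log (q a / p a) :=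
      Finset.sum_le_sum (fun a _ => sub_le_mul_log (q a) (p a) (hq a) (hp a) (h a))

lemma klDiv_self {α : Type*} [Fintype α] (p : α → ℝ) : klDiv p p = 0 := by
  rw [klDiv_eq_log]
  have : ∀ a : α, p a * Real.log (p a / p a) = 0 := by
    intro a
    rcases eq_or_ne (p a) 0 with h | h
    · simp [h]
    · simp [div_self h]
  simp [this]

lemma klDiv_pos {α : Type*} [Fintype α] (q p : α → ℝ)
    (hq : IsPMF q) (hp : IsPMF p) (hp' : ∀ a, 0 < p a) (hne : q ≠ p) :
    0 < klDiv q p := by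
  rw [klDiv_eq_log]
  apply div_pos _ (Real.log_pos one_lt_two)
  have key : ∀ a, 0 ≤ q a * Real.log (q a / p a) - (q a - p a) := by
    intro a
    have := sub_le_mul_log (q a) (p a) (hq.1 a) (hp.1 a) (fun _ => hp' a)
    linarith
  obtain ⟨a0, ha0⟩ : ∃ a, q a ≠ p a := by
    by_contra hc; push_neg at hc; exact hne (funext hc)
  have strict : 0 < q a0 * Real.log (q a0 / p a0) - (q a0 - p a0) := by
    rcases (hq.1 a0).eq_or_lt with h0 | hqp
    · rw [← h0]
      have : (0:ℝ) * Real.log (0 / p a0) - (0 - p a0) = p a0 := by simp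
      rw [this]; exact hp' a0
    · have hpp := hp' a0
      have hne1 : p a0 / q a0 ≠ 1 := by
        intro e
        have : p a0 = q a0 := by field_simp at e; linarith
        exact ha0 this.symm
      have h1 : Real.log (p a0 / q a0) < p a0 / q a0 - 1 :=
        Real.log_lt_sub_one_of_pos (div_pos hpp hqp) hne1
      have h2 : Real.log (q a0 / p a0) = - Real.log (p a0 / q a0) := by
        rw [Real.log_div (ne_of_gt hqp) (ne_of_gt hpp), Real.log_div (ne_of_gt hpp) (ne_of_gt hqp)]; ring
      have h3 : 1 - p a0 / q a0 < Real.log (q a0 / p a0) := by rw [h2]; linarith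
      have := mul_lt_mul_of_pos_left h3 hqp
      have e : q a0 * (1 - p a0 / q a0) = q a0 - p a0 := by field_simp
      linarith [e ▸ this]
  have : 0 < ∑ a, (q a * Real.log (q a / p a) - (q a - p a)) :=
    Finset.sum_pos' (fun a _ => key a) ⟨a0, Finset.mem_univ a0, strict⟩
  have hsum : ∑ a, (q a - p a) = 0 := by
    rw [Finset.sum_sub_distrib, hq.2, hp.2]; ring
  rw [Finset.sum_sub_distrib, hsum] at this
  linarith

lemma sum3_rot {A B C : Type*} [Fintype A] [Fintype B] [Fintype C] (f : A → B → C → ℝ) :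
    ∑ a, ∑ b, ∑ c, f a b c = ∑ c, ∑ a, ∑ b, f a b c := by
  calc ∑ a, ∑ b, ∑ c, f a b c = ∑ a, ∑ c, ∑ b, f a b c :=
        Finset.sum_congr rfl fun a _ => Finset.sum_comm
    _ = ∑ c, ∑ a, ∑ b, f a b c := Finset.sum_comm

lemma sum_pos_of_mem {ι : Type*} [Fintype ι] {f : ι → ℝ}
    (h : ∀ i, 0 ≤ f i) {i0 : ι} (h0 : 0 < f i0) : 0 < ∑ i, f i :=
  Finset.sum_pos' (fun i _ => h i) ⟨i0, Finset.mem_univ i0, h0⟩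

/-- `condMI` is nonnegative for any (pointwise nonneg) weight function. -/
lemma condMI_nonneg {A B C : Type*} [Fintype A] [Fintype B] [Fintype C]
    (p : A → B → C → ℝ) (hp : ∀ a b c, 0 ≤ p a b c) : 0 ≤ condMI p := by
  have L2 : (0:ℝ) < Real.log 2 := Real.log_pos one_lt_two
  have key : ∀ a b c,
      (p a b c - (∑ b', p a b' c) * (∑ a', p a' b c) / (∑ a', ∑ b', p a' b' c)) / Real.log 2
      ≤ p a b c * Real.logb 2 (p a b c * (∑ a', ∑ b', p a' b' c) /
          ((∑ b', p a b' c) * (∑ a', p a' b c))) := by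
    intro a b c
    set u := p a b c with hu
    set Ma := ∑ b', p a b' c with hMa
    set Mb := ∑ a', p a' b c with hMb
    set M := ∑ a', ∑ b', p a' b' c with hM
    have hMa0 : 0 ≤ Ma := Finset.sum_nonneg fun _ _ => hp _ _ _
    have hMb0 : 0 ≤ Mb := Finset.sum_nonneg fun _ _ => hp _ _ _
    have hM0 : 0 ≤ M := Finset.sum_nonneg fun _ _ => Finset.sum_nonneg fun _ _ => hp _ _ _
    have hv : 0 ≤ Ma * Mb / M := div_nonneg (mul_nonneg hMa0 hMb0) hM0
    have himp : 0 < u → 0 < Ma * Mb / M := by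
      intro hupos
      have h1 : 0 < Ma := sum_pos_of_mem (fun b' => hp a b' c) hupos
      have h2 : 0 < Mb := sum_pos_of_mem (fun a' => hp a' b c) hupos
      have h3 : 0 < M := sum_pos_of_mem (f := fun a' => ∑ b', p a' b' c)
        (fun a' => Finset.sum_nonneg fun _ _ => hp _ _ _) h1
      exact div_pos (mul_pos h1 h2) h3
    have := sub_le_mul_log u (Ma * Mb / M) (hp a b c) hv himp
    have harg : u / (Ma * Mb / M) = u * M / (Ma * Mb) := div_div_eq_mul_div u (Ma*Mb) M
    rw [harg] at this
    calc (u - Ma * Mb / M) / Real.log 2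
        ≤ (u * Real.log (u * M / (Ma * Mb))) / Real.log 2 := by gcongr
      _ = u * (Real.log (u * M / (Ma * Mb)) / Real.log 2) := by ring
      _ = u * Real.logb 2 (u * M / (Ma * Mb)) := by rw [Real.logb]
  -- now sum the pointwise bounds
  have step1 : ∑ a, ∑ b, ∑ c,
      (p a b c - (∑ b', p a b' c) * (∑ a', p a' b c) / (∑ a', ∑ b', p a' b' c)) / Real.log 2
      ≤ condMI p := by
    unfold condMI
    refine Finset.sum_le_sum fun a _ => Finset.sum_le_sum fun b _ =>
      Finset.sum_le_sum fun c _ => key a b c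
  refine le_trans (le_of_eq ?_) step1
  symm
  rw [sum3_rot]
  refine Finset.sum_eq_zero fun c _ => ?_
  have hz : ∑ a, ∑ b,
      (p a b c - (∑ b', p a b' c) * (∑ a', p a' b c) / (∑ a', ∑ b', p a' b' c)) = 0 := by
    simp only [Finset.sum_sub_distrib]
    have inner : ∀ a, (∑ b, (∑ b', p a b' c) * (∑ a', p a' b c) / (∑ a', ∑ b', p a' b' c))
        = (∑ b', p a b' c) * (∑ a', ∑ b', p a' b' c) / (∑ a', ∑ b', p a' b' c) := by
      intro a
      rw [← Finset.sum_div, ← Finset.mul_sum,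
        (Finset.sum_comm : (∑ b, ∑ a', p a' b c) = ∑ a', ∑ b', p a' b' c)]
    simp only [inner]
    rcases eq_or_ne (∑ a', ∑ b', p a' b' c) 0 with h0 | h0
    · simp [h0]
    · simp only [mul_div_assoc, div_self h0, mul_one, sub_self]
  calc ∑ a, ∑ b,
      ((p a b c - (∑ b', p a b' c) * (∑ a', p a' b c) / (∑ a', ∑ b', p a' b' c)) / Real.log 2)
      = (∑ a, ∑ b, (p a b c - (∑ b', p a b' c) * (∑ a', p a' b c) / (∑ a', ∑ b', p a' b' c))) / Real.log 2 := by
        rw [Finset.sum_div]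
        exact Finset.sum_congr rfl fun a _ => by rw [Finset.sum_div]
    _ = 0 := by rw [hz, zero_div]

/-- Chain rule `I(A;B₁B₂|C) = I(A;B₂|C) + I(A;B₁|B₂C)`. -/
lemma condMI_chain {A B₁ B₂ C : Type*} [Fintype A] [Fintype B₁] [Fintype B₂] [Fintype C]
    (p : A → B₁ × B₂ → C → ℝ) (hp : ∀ a b c, 0 ≤ p a b c) :
    condMI p = condMI (fun a b2 c => ∑ b1, p a (b1, b2) c)
      + condMI (fun a b1 (bc : B₂ × C) => p a (b1, bc.1) bc.2) := by
  have hprod : ∀ (f : B₁ × B₂ → ℝ), (∑ b, f b) = ∑ b1, ∑ b2, f (b1, b2) :=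
    fun f => Fintype.sum_prod_type f
  have hprod2 : ∀ (f : B₂ × C → ℝ), (∑ b, f b) = ∑ b2, ∑ c, f (b2, c) :=
    fun f => Fintype.sum_prod_type f
  have hcomm : ∀ (f : B₂ → B₁ → ℝ), (∑ b2, ∑ b1, f b2 b1) = ∑ b1, ∑ b2, f b2 b1 :=
    fun f => Finset.sum_comm
  have e1 : condMI p = ∑ a, ∑ b1, ∑ b2, ∑ c, p a (b1,b2) c *
      Real.logb 2 (p a (b1,b2) c * (∑ a', ∑ b1', ∑ b2', p a' (b1',b2') c) /
        ((∑ b1', ∑ b2', p a (b1',b2') c) * (∑ a', p a' (b1,b2) c))) := by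
    unfold condMI
    simp only [hprod]
  have e2 : condMI (fun a b2 c => ∑ b1, p a (b1, b2) c)
      = ∑ a, ∑ b2, ∑ c, (∑ b1, p a (b1,b2) c) *
        Real.logb 2 ((∑ b1, p a (b1,b2) c) * (∑ a', ∑ b1', ∑ b2', p a' (b1',b2') c) /
          ((∑ b1', ∑ b2', p a (b1',b2') c) * (∑ a', ∑ b1', p a' (b1',b2) c))) := by
    unfold condMI
    simp only [hcomm]
  have e3 : condMI (fun a b1 (bc : B₂ × C) => p a (b1, bc.1) bc.2)
      = ∑ a, ∑ b1, ∑ b2, ∑ c, p a (b1,b2) c *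
        Real.logb 2 (p a (b1,b2) c * (∑ a', ∑ b1', p a' (b1',b2) c) /
          ((∑ b1', p a (b1',b2) c) * (∑ a', p a' (b1,b2) c))) := by
    unfold condMI
    simp only [hprod2]
  rw [e1, e2, e3]
  -- reshape e2's sum into the quadruple form
  have e2' : ∀ a, (∑ b2, ∑ c, (∑ b1, p a (b1,b2) c) *
        Real.logb 2 ((∑ b1, p a (b1,b2) c) * (∑ a', ∑ b1', ∑ b2', p a' (b1',b2') c) /
          ((∑ b1', ∑ b2', p a (b1',b2') c) * (∑ a', ∑ b1', p a' (b1',b2) c))))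
      = ∑ b1, ∑ b2, ∑ c, p a (b1,b2) c *
        Real.logb 2 ((∑ b1', p a (b1',b2) c) * (∑ a', ∑ b1', ∑ b2', p a' (b1',b2') c) /
          ((∑ b1', ∑ b2', p a (b1',b2') c) * (∑ a', ∑ b1', p a' (b1',b2) c))) := by
    intro a
    rw [← sum3_rot (fun b1 b2 c => _)]
    refine Finset.sum_congr rfl fun b2 _ => Finset.sum_congr rfl fun c _ => ?_
    rw [Finset.sum_mul]
  simp only [e2']
  rw [← Finset.sum_add_distrib]
  refine Finset.sum_congr rfl fun a _ => ?_
  rw [← Finset.sum_add_distrib]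
  refine Finset.sum_congr rfl fun b1 _ => ?_
  rw [← Finset.sum_add_distrib]
  refine Finset.sum_congr rfl fun b2 _ => ?_
  rw [← Finset.sum_add_distrib]
  refine Finset.sum_congr rfl fun c _ => ?_
  -- pointwise identity
  set u := p a (b1,b2) c with hu
  set Q1 := ∑ b1', p a (b1',b2) c with hQ1
  set Ma := ∑ b1', ∑ b2', p a (b1',b2') c with hMa
  set N := ∑ a', ∑ b1', p a' (b1',b2) c with hN
  set M := ∑ a', ∑ b1', ∑ b2', p a' (b1',b2') c with hM
  set Mb := ∑ a', p a' (b1,b2) c with hMb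
  rcases (hp a (b1,b2) c).eq_or_lt with h0 | hupos
  · rw [hu, ← h0]; ring
  · have hQ1p : 0 < Q1 := sum_pos_of_mem (fun b1' => hp a (b1',b2) c) hupos
    have hMap : 0 < Ma := sum_pos_of_mem (f := fun b1' => ∑ b2', p a (b1',b2') c)
      (fun _ => Finset.sum_nonneg fun _ _ => hp _ _ _)
      (sum_pos_of_mem (fun b2' => hp a (b1,b2') c) hupos)
    have hNp : 0 < N := sum_pos_of_mem (f := fun a' => ∑ b1', p a' (b1',b2) c)
      (fun _ => Finset.sum_nonneg fun _ _ => hp _ _ _)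
      (sum_pos_of_mem (fun b1' => hp a (b1',b2) c) hupos)
    have hMp : 0 < M := sum_pos_of_mem (f := fun a' => ∑ b1', ∑ b2', p a' (b1',b2') c)
      (fun _ => Finset.sum_nonneg fun _ _ => Finset.sum_nonneg fun _ _ => hp _ _ _) hMap
    have hMbp : 0 < Mb := sum_pos_of_mem (fun a' => hp a' (b1,b2) c) hupos
    rw [← mul_add]
    congr 1
    rw [← Real.logb_mul (by positivity) (by positivity)]
    congr 1
    field_simp

lemma condMI_symm {A B C : Type*} [Fintype A] [Fintype B] [Fintype C]
    (p : A → B → C → ℝ) :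
    condMI p = condMI (fun b a c => p a b c) := by
  unfold condMI
  rw [Finset.sum_comm]
  refine Finset.sum_congr rfl fun b _ => Finset.sum_congr rfl fun a _ =>
    Finset.sum_congr rfl fun c _ => ?_
  congr 2
  rw [Finset.sum_comm]
  ring

lemma condMI_reindexB {A B₁ B₂ C : Type*} [Fintype A] [Fintype B₁] [Fintype B₂] [Fintype C]
    (p : A → B₁ × B₂ → C → ℝ) :
    condMI (fun a (b : B₂ × B₁) c => p a (b.2, b.1) c) = condMI p := by
  have hprod : ∀ (f : B₁ × B₂ → ℝ), (∑ b, f b) = ∑ b1, ∑ b2, f (b1, b2) :=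
    fun f => Fintype.sum_prod_type f
  have hprod2 : ∀ (f : B₂ × B₁ → ℝ), (∑ b, f b) = ∑ b2, ∑ b1, f (b2, b1) :=
    fun f => Fintype.sum_prod_type f
  have hcomm : ∀ (f : B₂ → B₁ → ℝ), (∑ b2, ∑ b1, f b2 b1) = ∑ b1, ∑ b2, f b2 b1 :=
    fun f => Finset.sum_comm
  unfold condMI
  simp only [hprod, hprod2, hcomm]

lemma condMI_drop_fst {A₁ A₂ B C : Type*} [Fintype A₁] [Fintype A₂] [Fintype B] [Fintype C]
    (p : A₁ × A₂ → B → C → ℝ) (hp : ∀ a b c, 0 ≤ p a b c) :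
    condMI (fun a2 b c => ∑ a1, p (a1, a2) b c) ≤ condMI p := by
  have h1 : condMI p = condMI (fun b (a : A₁ × A₂) c => p a b c) := condMI_symm p
  have h2 := condMI_chain (fun b (a : A₁ × A₂) c => p a b c) (fun b a c => hp a b c)
  have h3 : 0 ≤ condMI (fun b a1 (ac : A₂ × C) => p (a1, ac.1) b ac.2) :=
    condMI_nonneg _ (fun b a1 ac => hp _ _ _)
  have h4 : condMI (fun b a2 c => ∑ a1, p (a1, a2) b c)
      = condMI (fun a2 b c => ∑ a1, p (a1, a2) b c) :=
    (condMI_symm (fun a2 b c => ∑ a1, p (a1, a2) b c)).symm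
  rw [h1, h2, ← h4]
  linarith
lemma condMI_drop_snd {A₁ A₂ B C : Type*} [Fintype A₁] [Fintype A₂] [Fintype B] [Fintype C]
    (p : A₁ × A₂ → B → C → ℝ) (hp : ∀ a b c, 0 ≤ p a b c) :
    condMI (fun a1 b c => ∑ a2, p (a1, a2) b c) ≤ condMI p := by
  have h1 : condMI p = condMI (fun b (a : A₁ × A₂) c => p a b c) := condMI_symm p
  have h1' : condMI (fun b (a : A₁ × A₂) c => p a b c)
      = condMI (fun b (a : A₂ × A₁) c => p (a.2, a.1) b c) :=
    (condMI_reindexB (fun b (a : A₁ × A₂) c => p a b c)).symm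
  have h2 := condMI_chain (fun b (a : A₂ × A₁) c => p (a.2, a.1) b c)
    (fun b a c => hp _ _ _)
  have h3 : 0 ≤ condMI (fun b a2 (ac : A₁ × C) => p (ac.1, a2) b ac.2) :=
    condMI_nonneg _ (fun b a2 ac => hp _ _ _)
  have h4 : condMI (fun b a1 c => ∑ a2, p (a1, a2) b c)
      = condMI (fun a1 b c => ∑ a2, p (a1, a2) b c) :=
    (condMI_symm (fun a1 b c => ∑ a2, p (a1, a2) b c)).symm
  rw [h1, h1', h2, ← h4]
  linarith

section SDPI

lemma margX_sum_one (P : 𝓧 → 𝓨 → ℝ) (hP : IsPMF (fun p : 𝓧 × 𝓨 => P p.1 p.2)) :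
    ∑ x, margX P x = 1 := by
  have h := hP.2
  rw [Fintype.sum_prod_type] at h
  exact h

lemma margY_sum_one (P : 𝓧 → 𝓨 → ℝ) (hP : IsPMF (fun p : 𝓧 × 𝓨 => P p.1 p.2)) :
    ∑ y, margY P y = 1 := by
  have h := hP.2
  rw [Fintype.sum_prod_type] at h
  rw [show (∑ y, margY P y) = ∑ y, ∑ x, P x y from rfl, Finset.sum_comm]
  exact h

lemma chanOut_swap_eq (P : 𝓧 → 𝓨 → ℝ) (Q : 𝓨 → ℝ) :
    chanOut (swap P) Q = fun x => ∑ y, Q y * (P x y / margY P y) := rfl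

lemma chanOut_swap_pmf (P : 𝓧 → 𝓨 → ℝ) (hP : IsPMF (fun p : 𝓧 × 𝓨 => P p.1 p.2))
    (hY : ∀ y, 0 < margY P y) (Q : 𝓨 → ℝ) (hQ : IsPMF Q) :
    IsPMF (chanOut (swap P) Q) := by
  rw [chanOut_swap_eq]
  have hPnn : ∀ x y, 0 ≤ P x y := fun x y => hP.1 (x, y)
  constructor
  · intro x
    exact Finset.sum_nonneg fun y _ =>
      mul_nonneg (hQ.1 y) (div_nonneg (hPnn x y) (hY y).le)
  · rw [Finset.sum_comm]
    have : ∀ y, (∑ x, Q y * (P x y / margY P y)) = Q y := by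
      intro y
      rw [← Finset.mul_sum, ← Finset.sum_div,
        show (∑ x, P x y) = margY P y from rfl, div_self (ne_of_gt (hY y)), mul_one]
    rw [Finset.sum_congr rfl fun y _ => this y]
    exact hQ.2

lemma chanOut_swap_margY (P : 𝓧 → 𝓨 → ℝ) (hY : ∀ y, 0 < margY P y) :
    chanOut (swap P) (margY P) = margX P := by
  rw [chanOut_swap_eq]
  funext x
  rw [show margX P x = ∑ y, P x y from rfl]
  refine Finset.sum_congr rfl fun y _ => ?_
  rw [mul_comm, div_mul_cancel₀ _ (ne_of_gt (hY y))]

/-- Data processing inequality for the reverse channel `P_{X|Y}`. -/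
lemma dp_klDiv (P : 𝓧 → 𝓨 → ℝ) (hP : IsPMF (fun p : 𝓧 × 𝓨 => P p.1 p.2))
    (hY : ∀ y, 0 < margY P y) (Q : 𝓨 → ℝ) (hQ : IsPMF Q) :
    klDiv (chanOut (swap P) Q) (margX P) ≤ klDiv Q (margY P) := by
  have hPnn : ∀ x y, 0 ≤ P x y := fun x y => hP.1 (x, y)
  have L2 : (0:ℝ) < Real.log 2 := Real.log_pos one_lt_two
  rw [klDiv_eq_log, klDiv_eq_log, chanOut_swap_eq]
  have main : ∑ x, (∑ y, Q y * (P x y / margY P y)) *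
        Real.log ((∑ y, Q y * (P x y / margY P y)) / margX P x)
      ≤ ∑ y, Q y * Real.log (Q y / margY P y) := by
    have hPW : ∀ x, margX P x = ∑ y, margY P y * (P x y / margY P y) := by
      intro x
      rw [show margX P x = ∑ y, P x y from rfl]
      refine Finset.sum_congr rfl fun y _ => ?_
      rw [mul_comm, div_mul_cancel₀ _ (ne_of_gt (hY y))]
    have step2 : ∀ x, (∑ y, Q y * (P x y / margY P y)) *
          Real.log ((∑ y, Q y * (P x y / margY P y)) / margX P x)
        ≤ ∑ y, (Q y * (P x y / margY P y)) *
            Real.log ((Q y * (P x y / margY P y)) / (margY P y * (P x y / margY P y))) := by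
      intro x
      rw [hPW x]
      refine log_sum_ineq _ _
        (fun y => mul_nonneg (hQ.1 y) (div_nonneg (hPnn x y) (hY y).le))
        (fun y => mul_nonneg (hY y).le (div_nonneg (hPnn x y) (hY y).le)) ?_
      intro y hpos
      have hw : 0 < P x y / margY P y := by
        rcases (div_nonneg (hPnn x y) (hY y).le).eq_or_lt with h | h
        · rw [← h, mul_zero] at hpos; exact absurd hpos (lt_irrefl 0)
        · exact h
      exact mul_pos (hY y) hw
    have step3 : ∀ x y, (Q y * (P x y / margY P y)) *
          Real.log ((Q y * (P x y / margY P y)) / (margY P y * (P x y / margY P y)))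
        = (Q y * Real.log (Q y / margY P y)) * (P x y / margY P y) := by
      intro x y
      rcases eq_or_ne (P x y / margY P y) 0 with h | h
      · rw [h]; ring
      · rw [mul_div_mul_right _ _ h]; ring
    calc ∑ x, (∑ y, Q y * (P x y / margY P y)) *
          Real.log ((∑ y, Q y * (P x y / margY P y)) / margX P x)
        ≤ ∑ x, ∑ y, (Q y * (P x y / margY P y)) *
            Real.log ((Q y * (P x y / margY P y)) / (margY P y * (P x y / margY P y))) :=
          Finset.sum_le_sum fun x _ => step2 x
      _ = ∑ x, ∑ y, (Q y * Real.log (Q y / margY P y)) * (P x y / margY P y) :=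
          Finset.sum_congr rfl fun x _ => Finset.sum_congr rfl fun y _ => step3 x y
      _ = ∑ y, ∑ x, (Q y * Real.log (Q y / margY P y)) * (P x y / margY P y) :=
          Finset.sum_comm
      _ = ∑ y, Q y * Real.log (Q y / margY P y) := by
          refine Finset.sum_congr rfl fun y _ => ?_
          rw [← Finset.mul_sum, ← Finset.sum_div,
            show (∑ x, P x y) = margY P y from rfl, div_self (ne_of_gt (hY y)), mul_one]
  exact (div_le_div_iff_of_pos_right L2).mpr main


lemma sStar_swap_mem_le_one (P : 𝓧 → 𝓨 → ℝ) (hP : IsPMF (fun p : 𝓧 × 𝓨 => P p.1 p.2))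
    (hX : ∀ x, 0 < margX P x) (hY : ∀ y, 0 < margY P y) :
    ∀ r ∈ { r : ℝ | ∃ Q : 𝓨 → ℝ, IsPMF Q ∧ Q ≠ margX (swap P) ∧
      r = klDiv (chanOut (swap P) Q) (margY (swap P)) / klDiv Q (margX (swap P)) }, r ≤ 1 := by
  rintro r ⟨Q, hQ, hne, rfl⟩
  have hm1 : margX (swap P) = margY P := rfl
  have hm2 : margY (swap P) = margX P := rfl
  rw [hm1] at hne
  rw [hm1, hm2]
  have hYpmf : IsPMF (margY P) := ⟨fun y => (hY y).le, margY_sum_one P hP⟩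
  have hDy : 0 < klDiv Q (margY P) := klDiv_pos Q (margY P) hQ hYpmf hY hne
  have hDx : klDiv (chanOut (swap P) Q) (margX P) ≤ klDiv Q (margY P) :=
    dp_klDiv P hP hY Q hQ
  rw [div_le_one hDy]
  exact hDx

lemma sStar_swap_mem_nonneg (P : 𝓧 → 𝓨 → ℝ) (hP : IsPMF (fun p : 𝓧 × 𝓨 => P p.1 p.2))
    (hX : ∀ x, 0 < margX P x) (hY : ∀ y, 0 < margY P y) :
    ∀ r ∈ { r : ℝ | ∃ Q : 𝓨 → ℝ, IsPMF Q ∧ Q ≠ margX (swap P) ∧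
      r = klDiv (chanOut (swap P) Q) (margY (swap P)) / klDiv Q (margX (swap P)) }, 0 ≤ r := by
  rintro r ⟨Q, hQ, hne, rfl⟩
  have hm1 : margX (swap P) = margY P := rfl
  have hm2 : margY (swap P) = margX P := rfl
  rw [hm1] at hne
  rw [hm1, hm2]
  have hYpmf : IsPMF (margY P) := ⟨fun y => (hY y).le, margY_sum_one P hP⟩
  have hDy : 0 < klDiv Q (margY P) := klDiv_pos Q (margY P) hQ hYpmf hY hne
  have hcp := chanOut_swap_pmf P hP hY Q hQ
  have hDx : 0 ≤ klDiv (chanOut (swap P) Q) (margX P) := by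
    refine klDiv_nonneg' _ _ hcp.1 (fun x => (hX x).le) (fun x _ => hX x) ?_
    rw [hcp.2, margX_sum_one P hP]
  exact div_nonneg hDx hDy.le

lemma sStar_swap_nonneg (P : 𝓧 → 𝓨 → ℝ) (hP : IsPMF (fun p : 𝓧 × 𝓨 => P p.1 p.2))
    (hX : ∀ x, 0 < margX P x) (hY : ∀ y, 0 < margY P y) : 0 ≤ sStar (swap P) :=
  Real.sSup_nonneg (sStar_swap_mem_nonneg P hP hX hY)

lemma sStar_swap_le_one (P : 𝓧 → 𝓨 → ℝ) (hP : IsPMF (fun p : 𝓧 × 𝓨 => P p.1 p.2))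
    (hX : ∀ x, 0 < margX P x) (hY : ∀ y, 0 < margY P y) : sStar (swap P) ≤ 1 :=
  Real.sSup_le (sStar_swap_mem_le_one P hP hX hY) zero_le_one

/-- SDPI: `D(QW ‖ P_X) ≤ s*(Y;X) D(Q ‖ P_Y)`. -/
lemma sdpi_klDiv (P : 𝓧 → 𝓨 → ℝ) (hP : IsPMF (fun p : 𝓧 × 𝓨 => P p.1 p.2))
    (hX : ∀ x, 0 < margX P x) (hY : ∀ y, 0 < margY P y) (Q : 𝓨 → ℝ) (hQ : IsPMF Q) :
    klDiv (chanOut (swap P) Q) (margX P) ≤ sStar (swap P) * klDiv Q (margY P) := by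
  rcases eq_or_ne Q (margY P) with hEq | hne
  · rw [hEq, chanOut_swap_margY P hY, klDiv_self, klDiv_self, mul_zero]
  · have hYpmf : IsPMF (margY P) := ⟨fun y => (hY y).le, margY_sum_one P hP⟩
    have hDy : 0 < klDiv Q (margY P) := klDiv_pos Q (margY P) hQ hYpmf hY hne
    have hmem : klDiv (chanOut (swap P) Q) (margX P) / klDiv Q (margY P)
        ∈ { r : ℝ | ∃ Q' : 𝓨 → ℝ, IsPMF Q' ∧ Q' ≠ margX (swap P) ∧
          r = klDiv (chanOut (swap P) Q') (margY (swap P)) / klDiv Q' (margX (swap P)) } :=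
      ⟨Q, hQ, hne, rfl⟩
    have hbdd : BddAbove { r : ℝ | ∃ Q' : 𝓨 → ℝ, IsPMF Q' ∧ Q' ≠ margX (swap P) ∧
        r = klDiv (chanOut (swap P) Q') (margY (swap P)) / klDiv Q' (margX (swap P)) } :=
      ⟨1, fun r hr => sStar_swap_mem_le_one P hP hX hY r hr⟩
    have hle : klDiv (chanOut (swap P) Q) (margX P) / klDiv Q (margY P) ≤ sStar (swap P) :=
      le_csSup hbdd hmem
    calc klDiv (chanOut (swap P) Q) (margX P)
        = klDiv (chanOut (swap P) Q) (margX P) / klDiv Q (margY P) * klDiv Q (margY P) := by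
          rw [div_mul_cancel₀ _ (ne_of_gt hDy)]
      _ ≤ sStar (swap P) * klDiv Q (margY P) := mul_le_mul_of_nonneg_right hle hDy.le

lemma sum3_rev {A B C : Type*} [Fintype A] [Fintype B] [Fintype C] (f : A → B → C → ℝ) :
    ∑ a, ∑ b, ∑ c, f a b c = ∑ c, ∑ b, ∑ a, f a b c := by
  rw [sum3_rot]
  exact Finset.sum_congr rfl fun c _ => Finset.sum_comm

/-- the auxiliary conditional output pmfs -/
def gAux (P : 𝓧 → 𝓨 → ℝ) (wy : 𝓨 → 𝓠 → 𝓤y → ℝ) (x : 𝓧) (uy : 𝓤y) (q : 𝓠) : ℝ :=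
  ∑ y, P x y * wy y q uy

def hAux (P : 𝓧 → 𝓨 → ℝ) (wy : 𝓨 → 𝓠 → 𝓤y → ℝ) (uy : 𝓤y) (q : 𝓠) : ℝ :=
  ∑ y, margY P y * wy y q uy

/-- Key SDPI consequence: `I(X;U_Y|Q) ≤ s*(Y;X) · I(Y;U_Y|Q)`. -/
lemma condMI_X_UY_le (P : 𝓧 → 𝓨 → ℝ) (hP : IsPMF (fun p : 𝓧 × 𝓨 => P p.1 p.2))
    (hX : ∀ x, 0 < margX P x) (hY : ∀ y, 0 < margY P y)
    (pq : 𝓠 → ℝ) (hq : IsPMF pq)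
    (wx : 𝓧 → 𝓠 → 𝓤x → ℝ) (hwx : ∀ x q, IsPMF (wx x q))
    (wy : 𝓨 → 𝓠 → 𝓤y → ℝ) (hwy : ∀ y q, IsPMF (wy y q)) :
    condMI (fun (x : 𝓧) (uy : 𝓤y) (q : 𝓠) => ∑ ux : 𝓤x, ∑ y, btJoint P pq wx wy x y ux uy q)
      ≤ sStar (swap P) *
        condMI (fun (y : 𝓨) (uy : 𝓤y) (q : 𝓠) => ∑ x, ∑ ux : 𝓤x, btJoint P pq wx wy x y ux uy q) := by
  have hPnn : ∀ x y, 0 ≤ P x y := fun x y => hP.1 (x, y)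
  have hfA : (fun (x : 𝓧) (uy : 𝓤y) (q : 𝓠) => ∑ ux : 𝓤x, ∑ y, btJoint P pq wx wy x y ux uy q)
      = fun x uy q => pq q * gAux P wy x uy q := by
    funext x uy q
    unfold btJoint gAux
    calc ∑ ux : 𝓤x, ∑ y, P x y * pq q * wx x q ux * wy y q uy
        = ∑ ux : 𝓤x, wx x q ux * (pq q * ∑ y, P x y * wy y q uy) := by
          refine Finset.sum_congr rfl fun ux _ => ?_
          simp only [Finset.mul_sum]
          exact Finset.sum_congr rfl fun y _ => by ring
      _ = (∑ ux : 𝓤x, wx x q ux) * (pq q * ∑ y, P x y * wy y q uy) := by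
          rw [← Finset.sum_mul]
      _ = pq q * ∑ y, P x y * wy y q uy := by rw [(hwx x q).2, one_mul]
  have hfB : (fun (y : 𝓨) (uy : 𝓤y) (q : 𝓠) => ∑ x, ∑ ux : 𝓤x, btJoint P pq wx wy x y ux uy q)
      = fun y uy q => pq q * (margY P y * wy y q uy) := by
    funext y uy q
    unfold btJoint
    calc ∑ x, ∑ ux : 𝓤x, P x y * pq q * wx x q ux * wy y q uy
        = ∑ x, (∑ ux : 𝓤x, wx x q ux) * (P x y * (pq q * wy y q uy)) := by
          refine Finset.sum_congr rfl fun x _ => ?_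
          rw [Finset.sum_mul]
          exact Finset.sum_congr rfl fun ux _ => by ring
      _ = ∑ x, P x y * (pq q * wy y q uy) := by
          refine Finset.sum_congr rfl fun x _ => by rw [(hwx x q).2, one_mul]
      _ = (∑ x, P x y) * (pq q * wy y q uy) := by rw [← Finset.sum_mul]
      _ = pq q * (margY P y * wy y q uy) := by
          rw [show (∑ x, P x y) = margY P y from rfl]; ring
  rw [hfA, hfB]
  have mA1 : ∀ (x : 𝓧) (q : 𝓠), (∑ uy : 𝓤y, pq q * gAux P wy x uy q) = pq q * margX P x := by
    intro x q
    rw [← Finset.mul_sum]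
    congr 1
    unfold gAux
    rw [Finset.sum_comm, show margX P x = ∑ y, P x y from rfl]
    refine Finset.sum_congr rfl fun y _ => ?_
    rw [← Finset.mul_sum, (hwy y q).2, mul_one]
  have mA2 : ∀ (uy : 𝓤y) (q : 𝓠), (∑ x, pq q * gAux P wy x uy q) = pq q * hAux P wy uy q := by
    intro uy q
    rw [← Finset.mul_sum]
    congr 1
    unfold gAux hAux
    rw [Finset.sum_comm]
    refine Finset.sum_congr rfl fun y _ => ?_
    rw [← Finset.sum_mul, show (∑ x, P x y) = margY P y from rfl]
  have mA3 : ∀ q : 𝓠, (∑ x, ∑ uy : 𝓤y, pq q * gAux P wy x uy q) = pq q := by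
    intro q
    simp only [mA1]
    rw [← Finset.mul_sum, margX_sum_one P hP, mul_one]
  have mB1 : ∀ (y : 𝓨) (q : 𝓠), (∑ uy : 𝓤y, pq q * (margY P y * wy y q uy)) = pq q * margY P y := by
    intro y q
    simp only [← mul_assoc]
    rw [← Finset.mul_sum, (hwy y q).2, mul_one]
  have mB2 : ∀ (uy : 𝓤y) (q : 𝓠), (∑ y, pq q * (margY P y * wy y q uy)) = pq q * hAux P wy uy q := by
    intro uy q
    rw [← Finset.mul_sum]
    rfl
  have mB3 : ∀ q : 𝓠, (∑ y, ∑ uy : 𝓤y, pq q * (margY P y * wy y q uy)) = pq q := by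
    intro q
    simp only [mB1]
    rw [← Finset.mul_sum, margY_sum_one P hP, mul_one]
  unfold condMI
  simp only [mA3, mB3]
  simp only [mA1, mA2, mB1, mB2]
  rw [sum3_rev, sum3_rev (A := 𝓨) (B := 𝓤y) (C := 𝓠)]
  have block : ∀ (q : 𝓠) (uy : 𝓤y),
      (∑ x, pq q * gAux P wy x uy q * Real.logb 2 (pq q * gAux P wy x uy q * pq q /
          (pq q * margX P x * (pq q * hAux P wy uy q))))
      ≤ sStar (swap P) * ∑ y, pq q * (margY P y * wy y q uy) *
          Real.logb 2 (pq q * (margY P y * wy y q uy) * pq q /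
            (pq q * margY P y * (pq q * hAux P wy uy q))) := by
    intro q uy
    rcases eq_or_ne (pq q) 0 with h0 | hpq
    · simp [h0]
    · rcases eq_or_ne (hAux P wy uy q) 0 with hh0 | hh
      · have hwy0 : ∀ y, wy y q uy = 0 := by
          intro y
          have := (Finset.sum_eq_zero_iff_of_nonneg
            (fun y _ => mul_nonneg (hY y).le ((hwy y q).1 uy))).mp hh0 y (Finset.mem_univ y)
          rcases mul_eq_zero.mp this with h | h
          · exact absurd h (ne_of_gt (hY y))
          · exact h
        have hg0 : ∀ x, gAux P wy x uy q = 0 := by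
          intro x; unfold gAux; simp [hwy0]
        simp [hg0, hwy0]
      · -- main case
        set h := hAux P wy uy q with hh_def
        have hhpos : 0 < h := lt_of_le_of_ne
          (Finset.sum_nonneg fun y _ => mul_nonneg (hY y).le ((hwy y q).1 uy)) (Ne.symm hh)
        set Qy : 𝓨 → ℝ := fun y => margY P y * wy y q uy / h with hQy_def
        have hQpmf : IsPMF Qy := by
          constructor
          · intro y
            exact div_nonneg (mul_nonneg (hY y).le ((hwy y q).1 uy)) hhpos.le
          · rw [hQy_def]
            simp only
            rw [← Finset.sum_div, show (∑ y, margY P y * wy y q uy) = h from rfl,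
              div_self (ne_of_gt hhpos)]
        have hco : chanOut (swap P) Qy = fun x => gAux P wy x uy q / h := by
          rw [chanOut_swap_eq]
          funext x
          have hterm : ∀ y, Qy y * (P x y / margY P y) = P x y * wy y q uy / h := by
            intro y
            rw [hQy_def]
            simp only
            rw [div_mul_div_comm, mul_comm (margY P y) (wy y q uy), mul_assoc,
              mul_comm h (margY P y), ← div_div, mul_div_assoc,
              mul_div_cancel_left₀ _ (ne_of_gt (hY y)), mul_comm (wy y q uy) (P x y)]
          rw [Finset.sum_congr rfl fun y _ => hterm y, ← Finset.sum_div]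
          rfl
        have hsd := sdpi_klDiv P hP hX hY Qy hQpmf
        rw [hco] at hsd
        have eL : (∑ x, pq q * gAux P wy x uy q * Real.logb 2 (pq q * gAux P wy x uy q * pq q /
              (pq q * margX P x * (pq q * h))))
            = (pq q * h) * klDiv (fun x => gAux P wy x uy q / h) (margX P) := by
          unfold klDiv
          rw [Finset.mul_sum]
          refine Finset.sum_congr rfl fun x _ => ?_
          have harg : pq q * gAux P wy x uy q * pq q / (pq q * margX P x * (pq q * h))
              = gAux P wy x uy q / h / margX P x := by
            rw [show pq q * gAux P wy x uy q * pq q = (pq q * pq q) * gAux P wy x uy q from by ring,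
              show pq q * margX P x * (pq q * h) = (pq q * pq q) * (margX P x * h) from by ring,
              mul_div_mul_left _ _ (mul_ne_zero hpq hpq), div_div, mul_comm (margX P x) h]
          rw [harg]
          have hcoef : h * (gAux P wy x uy q / h) = gAux P wy x uy q := by
            rw [mul_comm, div_mul_cancel₀ _ hh]
          rw [mul_assoc (pq q) h _, ← mul_assoc h _ _, hcoef, ← mul_assoc]
        have eR : (∑ y, pq q * (margY P y * wy y q uy) * Real.logb 2
              (pq q * (margY P y * wy y q uy) * pq q / (pq q * margY P y * (pq q * h))))
            = (pq q * h) * klDiv Qy (margY P) := by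
          unfold klDiv
          rw [Finset.mul_sum]
          refine Finset.sum_congr rfl fun y _ => ?_
          have harg : pq q * (margY P y * wy y q uy) * pq q / (pq q * margY P y * (pq q * h))
              = Qy y / margY P y := by
            rw [hQy_def]
            simp only
            rw [show pq q * (margY P y * wy y q uy) * pq q
                = (pq q * pq q) * (margY P y * wy y q uy) from by ring,
              show pq q * margY P y * (pq q * h) = (pq q * pq q) * (margY P y * h) from by ring,
              mul_div_mul_left _ _ (mul_ne_zero hpq hpq), div_div, mul_comm h (margY P y)]
          rw [harg]
          have hcoef : h * (Qy y) = margY P y * wy y q uy := by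
            rw [hQy_def]
            simp only
            rw [mul_comm, div_mul_cancel₀ _ hh]
          rw [mul_assoc (pq q) h _, ← mul_assoc h _ _, hcoef]
          ring
        rw [eL, eR]
        have hnn : 0 ≤ pq q * h := mul_nonneg (hq.1 q) hhpos.le
        calc (pq q * h) * klDiv (fun x => gAux P wy x uy q / h) (margX P)
            ≤ (pq q * h) * (sStar (swap P) * klDiv Qy (margY P)) :=
              mul_le_mul_of_nonneg_left hsd hnn
          _ = sStar (swap P) * ((pq q * h) * klDiv Qy (margY P)) := by ring
  calc ∑ q, ∑ uy : 𝓤y, ∑ x, pq q * gAux P wy x uy q * Real.logb 2 (pq q * gAux P wy x uy q * pq q /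
        (pq q * margX P x * (pq q * hAux P wy uy q)))
      ≤ ∑ q, ∑ uy : 𝓤y, sStar (swap P) * ∑ y, pq q * (margY P y * wy y q uy) *
          Real.logb 2 (pq q * (margY P y * wy y q uy) * pq q /
            (pq q * margY P y * (pq q * hAux P wy uy q))) :=
        Finset.sum_le_sum fun q _ => Finset.sum_le_sum fun uy _ => block q uy
    _ = sStar (swap P) * ∑ q, ∑ uy : 𝓤y, ∑ y, pq q * (margY P y * wy y q uy) *
          Real.logb 2 (pq q * (margY P y * wy y q uy) * pq q /
            (pq q * margY P y * (pq q * hAux P wy uy q))) := by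
        rw [Finset.mul_sum]
        exact Finset.sum_congr rfl fun q _ => (Finset.mul_sum _ _ _).symm

end SDPI

/-- For a Berger–Tung-form joint pmf
`p(x,y) p(q) p(u_X|x,q) p(u_Y|y,q)`, if `R_X ≥ I(X;U_X|U_Y,Q)` and
`R_X + R_Y = I(X,Y;U_X,U_Y|Q)`, then `R_X + s*(Y;X)·R_Y ≥ I(X;U_X,U_Y|Q)`. -/
theorem rate_lower_bound_from_BT (P : 𝓧 → 𝓨 → ℝ)
    (hP : IsPMF (fun p : 𝓧 × 𝓨 => P p.1 p.2))
    (hX : ∀ x, 0 < margX P x) (hY : ∀ y, 0 < margY P y)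
    (pq : 𝓠 → ℝ) (hq : IsPMF pq)
    (wx : 𝓧 → 𝓠 → 𝓤x → ℝ) (hwx : ∀ x q, IsPMF (wx x q))
    (wy : 𝓨 → 𝓠 → 𝓤y → ℝ) (hwy : ∀ y q, IsPMF (wy y q))
    (Rx Ry : ℝ)
    (hRx : Rx ≥ condMI (fun (x : 𝓧) (ux : 𝓤x) (c : 𝓤y × 𝓠) =>
      ∑ y, btJoint P pq wx wy x y ux c.1 c.2))
    (hsum : Rx + Ry = condMI (fun (p : 𝓧 × 𝓨) (u : 𝓤x × 𝓤y) (q : 𝓠) =>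
      btJoint P pq wx wy p.1 p.2 u.1 u.2 q)) :
    Rx + sStar (swap P) * Ry ≥
      condMI (fun (x : 𝓧) (u : 𝓤x × 𝓤y) (q : 𝓠) =>
        ∑ y, btJoint P pq wx wy x y u.1 u.2 q) := by
  have hj : ∀ x y ux uy q, 0 ≤ btJoint P pq wx wy x y ux uy q := fun x y ux uy q =>
    mul_nonneg (mul_nonneg (mul_nonneg (hP.1 (x, y)) (hq.1 q)) ((hwx x q).1 ux)) ((hwy y q).1 uy)
  set s := sStar (swap P) with hs_def
  have hs0 : 0 ≤ s := sStar_swap_nonneg P hP hX hY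
  have hs1 : s ≤ 1 := sStar_swap_le_one P hP hX hY
  -- names for the information quantities
  set T3 := condMI (fun (x : 𝓧) (u : 𝓤x × 𝓤y) (q : 𝓠) =>
    ∑ y, btJoint P pq wx wy x y u.1 u.2 q) with hT3_def
  set T1 := condMI (fun (x : 𝓧) (ux : 𝓤x) (c : 𝓤y × 𝓠) =>
    ∑ y, btJoint P pq wx wy x y ux c.1 c.2) with hT1_def
  set T2 := condMI (fun (p : 𝓧 × 𝓨) (u : 𝓤x × 𝓤y) (q : 𝓠) =>
    btJoint P pq wx wy p.1 p.2 u.1 u.2 q) with hT2_def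
  set A := condMI (fun (x : 𝓧) (uy : 𝓤y) (q : 𝓠) =>
    ∑ ux : 𝓤x, ∑ y, btJoint P pq wx wy x y ux uy q) with hA_def
  set B := condMI (fun (y : 𝓨) (uy : 𝓤y) (q : 𝓠) =>
    ∑ x, ∑ ux : 𝓤x, btJoint P pq wx wy x y ux uy q) with hB_def
  set C1 := condMI (fun (xy : 𝓧 × 𝓨) (uy : 𝓤y) (q : 𝓠) =>
    ∑ ux : 𝓤x, btJoint P pq wx wy xy.1 xy.2 ux uy q) with hC1_def
  set C2 := condMI (fun (xy : 𝓧 × 𝓨) (ux : 𝓤x) (bc : 𝓤y × 𝓠) =>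
    btJoint P pq wx wy xy.1 xy.2 ux bc.1 bc.2) with hC2_def
  have hchain3 : T3 = A + T1 :=
    condMI_chain (fun (x : 𝓧) (u : 𝓤x × 𝓤y) (q : 𝓠) => ∑ y, btJoint P pq wx wy x y u.1 u.2 q)
      (fun x u q => Finset.sum_nonneg fun y _ => hj x y u.1 u.2 q)
  have hchain2 : T2 = C1 + C2 :=
    condMI_chain (fun (xy : 𝓧 × 𝓨) (u : 𝓤x × 𝓤y) (q : 𝓠) =>
        btJoint P pq wx wy xy.1 xy.2 u.1 u.2 q)
      (fun xy u q => hj xy.1 xy.2 u.1 u.2 q)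
  have hBC1 : B ≤ C1 :=
    condMI_drop_fst (fun (xy : 𝓧 × 𝓨) (uy : 𝓤y) (q : 𝓠) =>
        ∑ ux : 𝓤x, btJoint P pq wx wy xy.1 xy.2 ux uy q)
      (fun xy uy q => Finset.sum_nonneg fun ux _ => hj xy.1 xy.2 ux uy q)
  have hT1C2 : T1 ≤ C2 :=
    condMI_drop_snd (fun (xy : 𝓧 × 𝓨) (ux : 𝓤x) (bc : 𝓤y × 𝓠) =>
        btJoint P pq wx wy xy.1 xy.2 ux bc.1 bc.2)
      (fun xy ux bc => hj xy.1 xy.2 ux bc.1 bc.2)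
  have hAB : A ≤ s * B := condMI_X_UY_le P hP hX hY pq hq wx hwx wy hwy
  have hRyEq : Ry = C1 + C2 - Rx := by
    have := hsum
    rw [hchain2] at this
    linarith
  have hsRy : s * Ry = s * C1 + s * C2 - s * Rx := by rw [hRyEq]; ring
  have h1 : s * B ≤ s * C1 := mul_le_mul_of_nonneg_left hBC1 hs0
  have h2 : s * T1 ≤ s * C2 := mul_le_mul_of_nonneg_left hT1C2 hs0
  have h3 : T1 * (1 - s) ≤ Rx * (1 - s) :=
    mul_le_mul_of_nonneg_right hRx (by linarith)
  have h3' : T1 - s * T1 ≤ Rx - s * Rx := by nlinarith [h3]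
  rw [ge_iff_le, hchain3]
  linarith

end
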